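/- Vanishing of the high multilinear components (Lemma 5.1, first assertion): Fix κ ∈ {1, −1} and let w_n^{(k)} be defined by the multilinear recursion. If n is odd then w_n^{(k)} ≡ 0 for every k > (n+1)/2; if n is even then w_n^{(k)} ≡ 0 for every k > n/2. That is, in these ranges w_n^{(k)}[φ_1,…,φ_k; ψ_2,…,ψ_k](x) = 0 for all Schwartz inputs φ_1,…,φ_k, ψ_2,…,ψ_k ∈ S(ℝ;ℂ) and all x ∈ ℝ. -/
import Mathlib


/-- Vanishing of the high multilinear components: if `n` is odd then
`w n k ≡ 0` for every `k > (n+1)/2` (i.e. `n + 1 < 2 * k`), and if `n` is even then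
`w n k ≡ 0` for every `k > n/2` (i.e. `n < 2 * k`), on all Schwartz inputs. -/
theorem nls_hierarchy_high_components_vanish
    (κ : ℂ) (hκ : κ = 1 ∨ κ = -1)
    (w : ℕ → ℕ → (ℕ → ℝ → ℂ) → (ℕ → ℝ → ℂ) → ℝ → ℂ)
    (hw_base₁ : ∀ φ ψ : ℕ → ℝ → ℂ, w 1 1 φ ψ = φ 1)
    (hw_base₂ : ∀ k, 2 ≤ k → ∀ φ ψ : ℕ → ℝ → ℂ, w 1 k φ ψ = 0)
    (hw_rec : ∀ n k, 1 ≤ n → 1 ≤ k → ∀ (φ ψ : ℕ → ℝ → ℂ) (x : ℝ),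
      w (n + 1) k φ ψ x =
        -Complex.I * deriv (w n k φ ψ) x +
          κ * ∑ m ∈ Finset.Ico 1 n, ∑ l ∈ Finset.Ico 1 k,
            ψ (l + 1) x * w m l φ ψ x *
              w (n - m) (k - l) (fun i => φ (l + i)) (fun i => ψ (l + i)) x)
    (n k : ℕ) (hn : 1 ≤ n) :
    (Odd n → n + 1 < 2 * k →
      ∀ (φ ψ : ℕ → SchwartzMap ℝ ℂ) (x : ℝ),
        w n k (fun i => ⇑(φ i)) (fun i => ⇑(ψ i)) x = 0) ∧
    (Even n → n < 2 * k →
      ∀ (φ ψ : ℕ → SchwartzMap ℝ ℂ) (x : ℝ),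
        w n k (fun i => ⇑(φ i)) (fun i => ⇑(ψ i)) x = 0) := by
  have key : ∀ n, 1 ≤ n → ∀ k, n + 1 < 2 * k →
      ∀ (φ ψ : ℕ → SchwartzMap ℝ ℂ) (x : ℝ),
        w n k (fun i => ⇑(φ i)) (fun i => ⇑(ψ i)) x = 0 := by
    intro n
    induction n using Nat.strong_induction_on with
    | _ n ih =>
      intro hn k hk φ ψ x
      by_cases h1 : n = 1
      · subst h1
        have := hw_base₂ k (by omega) (fun i => ⇑(φ i)) (fun i => ⇑(ψ i))
        simp [this]
      · obtain ⟨m, rfl⟩ : ∃ m, n = m + 1 := ⟨n - 1, by omega⟩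
        have hm : 1 ≤ m := by omega
        rw [hw_rec m k hm (by omega)]
        have hder : w m k (fun i => ⇑(φ i)) (fun i => ⇑(ψ i)) = fun _ => 0 :=
          funext fun y => ih m (by omega) (by omega) k (by omega) φ ψ y
        have hsum : (∑ m' ∈ Finset.Ico 1 m, ∑ l ∈ Finset.Ico 1 k,
            (fun i => ⇑(ψ i)) (l + 1) x *
              w m' l (fun i => ⇑(φ i)) (fun i => ⇑(ψ i)) x *
              w (m - m') (k - l) (fun i => (fun j => ⇑(φ j)) (l + i))
                (fun i => (fun j => ⇑(ψ j)) (l + i)) x) = 0 := by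
          apply Finset.sum_eq_zero
          intro m' hm'
          apply Finset.sum_eq_zero
          intro l hl
          simp only [Finset.mem_Ico] at hm' hl
          by_cases hc : m' + 1 < 2 * l
          · rw [ih m' (by omega) (by omega) l hc φ ψ x]
            ring
          · have h0 : w (m - m') (k - l) (fun i => ⇑(φ (l + i)))
                (fun i => ⇑(ψ (l + i))) x = 0 :=
              ih (m - m') (by omega) (by omega) (k - l) (by omega)
                (fun i => φ (l + i)) (fun i => ψ (l + i)) x
            rw [show (fun i => (fun j => ⇑(φ j)) (l + i)) = fun i => ⇑(φ (l + i)) from rfl,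
              show (fun i => (fun j => ⇑(ψ j)) (l + i)) = fun i => ⇑(ψ (l + i)) from rfl, h0]
            ring
        rw [hder, hsum]
        simp
  constructor
  · intro _ hk φ ψ x
    exact key n hn k hk φ ψ x
  · intro heven hk φ ψ x
    obtain ⟨m, rfl⟩ := heven
    exact key _ hn k (by omega) φ ψ x
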